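/- arXiv:2107.01039 — 3 statements merged into one kernel-verified Lean document; each statement's English description precedes it below -/
import Mathlib

section
/- Suppose f ∈ L¹_loc(ℝ) admits a modulus of growth ω with ω(0+) = 0, i.e. ess sup_x [f(x+h) − f(x)] ≤ ω(h) for all h > 0 where ω: (0,∞) → (0,∞) is increasing with lim_{h→0⁺} ω(h) = 0. Then f admits an essential left limit and an essential right limit at every point x ∈ ℝ; in particular f coincides almost everywhere with a left-continuous function and also with a right-continuous function. -/
open MeasureTheory Real Set
open scoped ENNReal


private lemma left_approx_exists
    (f : ℝ → ℝ) (G : Set ℝ) (W : ℝ → ℝ)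
    (hdense : ∀ a b : ℝ, a < b → (G ∩ Set.Ioo a b).Nonempty)
    (key : ∀ x ∈ G, ∀ y ∈ G, x < y → f y ≤ f x + W (y - x))
    (hW : Monotone W)
    (hW0 : ∀ ε > 0, ∃ δ > 0, δ < 1 ∧ W δ < ε) :
    ∀ x : ℝ, ∃ L : ℝ, ∀ ε > 0, ∃ δ > 0, ∀ z ∈ G, z ∈ Set.Ioo (x - δ) x → |f z - L| ≤ ε := by
  intro x
  obtain ⟨y₀, hy₀G, hy₀⟩ := hdense x (x+1) (by linarith)
  obtain ⟨z₀, hz₀G, hz₀⟩ := hdense (x-2) (x-1) (by linarith)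
  set m := f y₀ - W (y₀ - x + 1) with hm
  set M := f z₀ + W 2 with hM
  have hmM : ∀ z ∈ G, z ∈ Ioo (x-1) x → m ≤ f z ∧ f z ≤ M := by
    intro z hzG hz
    constructor
    · have h1 : f y₀ ≤ f z + W (y₀ - z) := key z hzG y₀ hy₀G (lt_trans hz.2 hy₀.1)
      have h2 : W (y₀ - z) ≤ W (y₀ - x + 1) := hW (by linarith [hz.1])
      rw [hm]; linarith
    · have h1 : f z ≤ f z₀ + W (z - z₀) := key z₀ hz₀G z hzG (by linarith [hz₀.2, hz.1])
      have h2 : W (z - z₀) ≤ W 2 := hW (by linarith [hz₀.1, hz.2])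
      rw [hM]; linarith
  set A : ℝ → Set ℝ := fun δ => f '' (G ∩ Ioo (x - δ) x) with hA
  have hA_ne : ∀ δ > 0, (A δ).Nonempty := by
    intro δ hδ
    obtain ⟨z, hz⟩ := hdense (x - δ) x (by linarith)
    exact ⟨f z, mem_image_of_mem f hz⟩
  have hA_bdd : ∀ δ, δ ≤ 1 → m ∈ lowerBounds (A δ) := by
    intro δ hδ v hv
    obtain ⟨z, ⟨hzG, hz⟩, rfl⟩ := hv
    exact (hmM z hzG ⟨by linarith [hz.1], hz.2⟩).1
  set I : ℝ → ℝ := fun δ => sInf (A δ) with hI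
  have hI_le : ∀ δ, δ ≤ 1 → ∀ z ∈ G, z ∈ Ioo (x-δ) x → I δ ≤ f z := by
    intro δ hδ z hzG hz
    exact csInf_le ⟨m, hA_bdd δ hδ⟩ (mem_image_of_mem f ⟨hzG, hz⟩)
  have hI_leM : ∀ δ, 0 < δ → δ ≤ 1 → I δ ≤ M := by
    intro δ h1 h2
    obtain ⟨z, hzG, hz⟩ := hdense (x - δ) x (by linarith)
    exact le_trans (hI_le δ h2 z hzG hz)
      (hmM z hzG ⟨by linarith [hz.1], hz.2⟩).2
  set T : Set ℝ := I '' Ioc (0:ℝ) 1 with hT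
  have hT_ne : T.Nonempty := ⟨I 1, mem_image_of_mem I ⟨one_pos, le_refl 1⟩⟩
  have hT_bdd : BddAbove T := by
    refine ⟨M, ?_⟩
    rintro v ⟨δ, hδ, rfl⟩
    exact hI_leM δ hδ.1 hδ.2
  set L := sSup T with hL
  refine ⟨L, ?_⟩
  intro ε hε
  obtain ⟨v, hvT, hv⟩ := exists_lt_of_lt_csSup hT_ne (show L - ε/2 < L by linarith)
  obtain ⟨δ₂, hδ₂, rfl⟩ := hvT
  obtain ⟨δ₃, hδ₃pos, hδ₃lt1, hδ₃W⟩ := hW0 (ε/4) (by linarith)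
  have hIδ₃_le_L : I δ₃ ≤ L := le_csSup hT_bdd (mem_image_of_mem I ⟨hδ₃pos, le_of_lt hδ₃lt1⟩)
  obtain ⟨v', hv'A, hv'lt⟩ := exists_lt_of_csInf_lt (hA_ne δ₃ hδ₃pos)
    (show I δ₃ < I δ₃ + ε/4 by linarith)
  obtain ⟨z', ⟨hz'G, hz'⟩, rfl⟩ := hv'A
  refine ⟨min (x - z') δ₂, lt_min (by linarith [hz'.2]) hδ₂.1, ?_⟩
  intro z hzG hz
  have hmin1 := min_le_left (x - z') δ₂
  have hmin2 := min_le_right (x - z') δ₂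
  have hz2 : z ∈ Ioo (x - δ₂) x := ⟨by linarith [hz.1], hz.2⟩
  have h_lower : L - ε/2 < f z := lt_of_lt_of_le hv (hI_le δ₂ hδ₂.2 z hzG hz2)
  have hz'z : z' < z := by linarith [hz.1]
  have h_upper : f z ≤ f z' + W (z - z') := key z' hz'G z hzG hz'z
  have hWz : W (z - z') ≤ W δ₃ := hW (by linarith [hz.2, hz'.1])
  rw [abs_le]
  constructor <;> [linarith; linarith]


private lemma leftCont_of_approx
    (f : ℝ → ℝ) (G : Set ℝ) (Lf : ℝ → ℝ)
    (hdense : ∀ a b : ℝ, a < b → (G ∩ Set.Ioo a b).Nonempty)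
    (happrox : ∀ x, ∀ ε > 0, ∃ δ > 0, ∀ z ∈ G, z ∈ Set.Ioo (x - δ) x → |f z - Lf x| ≤ ε) :
    ∀ x, ContinuousWithinAt Lf (Set.Iic x) x := by
  intro x
  rw [Metric.continuousWithinAt_iff]
  intro ε hε
  obtain ⟨δ₀, hδ₀, h₀⟩ := happrox x (ε/3) (by linarith)
  refine ⟨δ₀, hδ₀, ?_⟩
  intro y hy hdist
  rcases eq_or_lt_of_le (Set.mem_Iic.mp hy) with rfl | hyx
  · simpa [dist_self] using hε
  · obtain ⟨δ₁, hδ₁, h₁⟩ := happrox y (ε/3) (by linarith)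
    have hdy : x - δ₀ < y := by
      rw [Real.dist_eq, abs_sub_lt_iff] at hdist; linarith [hdist.2]
    obtain ⟨z, hzG, hz⟩ := hdense (max (x - δ₀) (y - δ₁)) y
      (by rw [max_lt_iff]; exact ⟨hdy, by linarith⟩)
    have hza := h₁ z hzG ⟨lt_of_le_of_lt (le_max_right _ _) hz.1, hz.2⟩
    have hzb := h₀ z hzG ⟨lt_of_le_of_lt (le_max_left _ _) hz.1, lt_trans hz.2 hyx⟩
    rw [Real.dist_eq]
    rw [abs_le] at hza hzb
    rw [abs_lt]
    constructor <;> [linarith; linarith]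

private lemma restrict_Ioo_ne_zero {a b : ℝ} (hab : a < b) :
    volume.restrict (Set.Ioo a b) ≠ 0 := by
  intro h
  have h1 : volume (Set.Ioo a b) = 0 := by
    rw [← Measure.restrict_apply_univ, h]; rfl
  rw [Real.volume_Ioo] at h1
  exact absurd h1 (ne_of_gt (ENNReal.ofReal_pos.mpr (by linarith)))

private lemma dense_of_conull (G : Set ℝ) (hG : ∀ᵐ x ∂(volume : Measure ℝ), x ∈ G) :
    ∀ a b : ℝ, a < b → (G ∩ Set.Ioo a b).Nonempty := by
  intro a b hab
  haveI := ae_neBot.mpr (restrict_Ioo_ne_zero hab)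
  have hmem : ∀ᵐ z ∂(volume.restrict (Set.Ioo a b)), z ∈ Set.Ioo a b :=
    ae_restrict_mem measurableSet_Ioo
  obtain ⟨z, h1, h2⟩ := ((ae_restrict_of_ae hG).and hmem).exists
  exact ⟨z, h1, h2⟩

private lemma key_ineq (f₀ W : ℝ → ℝ) (hW : Monotone W)
    {x y : ℝ} (hxy : x < y)
    (hx : ∀ᵐ h ∂(volume.restrict (Set.Ioi (0:ℝ))), f₀ (x + h) ≤ f₀ x + W h)
    (hy : ∀ᵐ h ∂(volume.restrict (Set.Ioi (0:ℝ))), f₀ y ≤ f₀ (y - h) + W h) :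
    f₀ y ≤ f₀ x + 2 * W (y - x) := by
  have hx' : ∀ᵐ z ∂(volume : Measure ℝ), z - x ∈ Set.Ioi (0:ℝ) → f₀ z ≤ f₀ x + W (z - x) := by
    have h1 : ∀ᵐ h ∂(volume : Measure ℝ), h ∈ Set.Ioi (0:ℝ) → f₀ (x + h) ≤ f₀ x + W h :=
      (ae_restrict_iff' measurableSet_Ioi).mp hx
    have ht : Filter.Tendsto (fun z : ℝ => z - x) (ae volume) (ae volume) :=
      (measurePreserving_sub_right volume x).quasiMeasurePreserving.tendsto_ae
    filter_upwards [ht.eventually h1] with z hz hzx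
    have := hz hzx
    rwa [show x + (z - x) = z by ring] at this
  have hy' : ∀ᵐ z ∂(volume : Measure ℝ), y - z ∈ Set.Ioi (0:ℝ) → f₀ y ≤ f₀ z + W (y - z) := by
    have h1 : ∀ᵐ h ∂(volume : Measure ℝ), h ∈ Set.Ioi (0:ℝ) → f₀ y ≤ f₀ (y - h) + W h :=
      (ae_restrict_iff' measurableSet_Ioi).mp hy
    have ht : Filter.Tendsto (fun z : ℝ => y - z) (ae volume) (ae volume) :=
      (Measure.measurePreserving_sub_left volume y).quasiMeasurePreserving.tendsto_ae
    filter_upwards [ht.eventually h1] with z hz hzy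
    have := hz hzy
    rwa [show y - (y - z) = z by ring] at this
  haveI := ae_neBot.mpr (restrict_Ioo_ne_zero hxy)
  have hmem : ∀ᵐ z ∂(volume.restrict (Set.Ioo x y)), z ∈ Set.Ioo x y :=
    ae_restrict_mem measurableSet_Ioo
  obtain ⟨z, ⟨h5, h6⟩, hz⟩ := ((ae_restrict_of_ae (hx'.and hy')).and hmem).exists
  have e1 := h5 (by simp only [Set.mem_Ioi]; linarith [hz.1])
  have e2 := h6 (by simp only [Set.mem_Ioi]; linarith [hz.2])
  have w1 : W (z - x) ≤ W (y - x) := hW (by linarith [hz.2])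
  have w2 : W (y - z) ≤ W (y - x) := hW (by linarith [hz.1])
  linarith


private lemma good_set (f f₀ : ℝ → ℝ) (hf₀ : Measurable f₀) (hff₀ : f =ᵐ[volume] f₀)
    (W : ℝ → ℝ) (hWmeas : Measurable W)
    (hbound : ∀ h > 0, ∀ᵐ x ∂(volume : Measure ℝ), f (x + h) - f x ≤ W h) :
    ∀ᵐ x ∂(volume : Measure ℝ),
      (∀ᵐ h ∂(volume.restrict (Set.Ioi (0:ℝ))), f₀ (x + h) ≤ f₀ x + W h) ∧
      (∀ᵐ h ∂(volume.restrict (Set.Ioi (0:ℝ))), f₀ x ≤ f₀ (x - h) + W h) := by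
  have hb₀ : ∀ h : ℝ, 0 < h → ∀ᵐ x ∂(volume : Measure ℝ), f₀ (x + h) ≤ f₀ x + W h := by
    intro h hh
    have ht : Filter.Tendsto (fun x : ℝ => x + h) (ae volume) (ae volume) :=
      (measurePreserving_add_right volume h).quasiMeasurePreserving.tendsto_ae
    filter_upwards [hbound h hh, ht.eventually hff₀, hff₀] with x h1 h2 h3
    linarith
  have hb₁ : ∀ h : ℝ, 0 < h → ∀ᵐ x ∂(volume : Measure ℝ), f₀ x ≤ f₀ (x - h) + W h := by
    intro h hh
    have ht : Filter.Tendsto (fun x : ℝ => x - h) (ae volume) (ae volume) :=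
      (measurePreserving_sub_right volume h).quasiMeasurePreserving.tendsto_ae
    filter_upwards [ht.eventually (hb₀ h hh)] with x h1
    rwa [show x - h + h = x by ring] at h1
  have m1 : MeasurableSet {z : ℝ × ℝ | f₀ (z.1 + z.2) ≤ f₀ z.1 + W z.2} := by
    apply measurableSet_le
    · exact hf₀.comp (measurable_fst.add measurable_snd)
    · exact (hf₀.comp measurable_fst).add (hWmeas.comp measurable_snd)
  have m2 : MeasurableSet {z : ℝ × ℝ | f₀ z.1 ≤ f₀ (z.1 - z.2) + W z.2} := by
    apply measurableSet_le
    · exact hf₀.comp measurable_fst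
    · exact (hf₀.comp (measurable_fst.sub measurable_snd)).add (hWmeas.comp measurable_snd)
  have c1 : ∀ᵐ x ∂(volume : Measure ℝ), ∀ᵐ h ∂(volume.restrict (Set.Ioi (0:ℝ))),
      f₀ (x + h) ≤ f₀ x + W h := by
    rw [Measure.ae_ae_comm m1, ae_restrict_iff' measurableSet_Ioi]
    exact Filter.Eventually.of_forall (fun h hh => hb₀ h hh)
  have c2 : ∀ᵐ x ∂(volume : Measure ℝ), ∀ᵐ h ∂(volume.restrict (Set.Ioi (0:ℝ))),
      f₀ x ≤ f₀ (x - h) + W h := by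
    rw [Measure.ae_ae_comm m2, ae_restrict_iff' measurableSet_Ioi]
    exact Filter.Eventually.of_forall (fun h hh => hb₁ h hh)
  filter_upwards [c1, c2] with x h1 h2
  exact ⟨h1, h2⟩

private lemma jump_countable (Lf Rf W : ℝ → ℝ) (hW : Monotone W)
    (hW0 : ∀ ε > 0, ∃ δ > 0, δ < 1 ∧ W δ < ε)
    (hS4 : ∀ x y : ℝ, x < y → Lf y ≤ Rf x + W (y - x)) :
    Set.Countable {x : ℝ | Rf x < Lf x} := by
  have hsub : {x : ℝ | Rf x < Lf x} ⊆
      ⋃ (t : ℚ × ℚ × ℚ × ℚ), {x | Rf x < (t.1 : ℝ) ∧ (t.2.1 : ℝ) < Lf x ∧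
        W (t.2.2.1 : ℝ) < (t.2.1 : ℝ) - (t.1 : ℝ) ∧ 0 < (t.2.2.1 : ℝ) ∧
        |x - (t.2.2.2 : ℝ)| < (t.2.2.1 : ℝ)/2} := by
    intro x hx
    simp only [Set.mem_setOf_eq] at hx
    obtain ⟨p, hp1, hp2⟩ := exists_rat_btwn hx
    obtain ⟨q, hq1, hq2⟩ := exists_rat_btwn hp2
    obtain ⟨δ, hδ0, hδ1, hδW⟩ := hW0 ((q:ℝ) - p) (by linarith)
    obtain ⟨r, hr1, hr2⟩ := exists_rat_btwn (show (0:ℝ) < δ from hδ0)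
    obtain ⟨s, hs⟩ := exists_rat_near x (show (0:ℝ) < (r:ℝ)/2 by linarith)
    refine Set.mem_iUnion.mpr ⟨(p, q, r, s), ?_⟩
    exact ⟨hp1, hq2, lt_of_le_of_lt (hW (le_of_lt hr2)) hδW, hr1, hs⟩
  refine Set.Countable.mono hsub (Set.countable_iUnion fun t => ?_)
  apply Set.Subsingleton.countable
  obtain ⟨p, q, r, s⟩ := t
  have main : ∀ a b : ℝ, a < b →
      (Rf a < (p:ℝ) ∧ (q:ℝ) < Lf a ∧ W (r:ℝ) < (q:ℝ) - p ∧ 0 < (r:ℝ) ∧ |a - (s:ℝ)| < (r:ℝ)/2) →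
      (Rf b < (p:ℝ) ∧ (q:ℝ) < Lf b ∧ W (r:ℝ) < (q:ℝ) - p ∧ 0 < (r:ℝ) ∧ |b - (s:ℝ)| < (r:ℝ)/2) →
      False := by
    intro a b hab ha hb
    obtain ⟨ha1, ha2, hWr, hr0, ha5⟩ := ha
    obtain ⟨hb1, hb2, -, -, hb5⟩ := hb
    rw [abs_lt] at ha5 hb5
    have h1 : b - a ≤ (r:ℝ) := by linarith [ha5.1, hb5.2]
    have h2 : W (b - a) ≤ W (r:ℝ) := hW h1
    have h3 := hS4 a b hab
    linarith
  intro x₁ h₁ x₂ h₂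
  simp only [Set.mem_setOf_eq] at h₁ h₂
  by_contra hne
  rcases lt_or_gt_of_ne hne with hlt | hlt
  · exact main x₁ x₂ hlt h₁ h₂
  · exact main x₂ x₁ hlt h₂ h₁


theorem essential_limits_of_modulus_of_growth (f : ℝ → ℝ)
    (hf : LocallyIntegrable f volume)
    (ω : ℝ → ℝ) (hmono : StrictMonoOn ω (Set.Ioi 0)) (hpos : ∀ h > 0, 0 < ω h)
    (h0 : Filter.Tendsto ω (nhdsWithin 0 (Set.Ioi 0)) (nhds 0))
    (hbound : ∀ h > 0, ∀ᵐ x ∂(volume : Measure ℝ), f (x + h) - f x ≤ ω h) :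
    (∀ x : ℝ, ∃ L : ℝ, ∀ ε > 0, ∃ δ > 0,
      ∀ᵐ y ∂(volume : Measure ℝ), y ∈ Set.Ioo (x - δ) x → |f y - L| < ε) ∧
    (∀ x : ℝ, ∃ L : ℝ, ∀ ε > 0, ∃ δ > 0,
      ∀ᵐ y ∂(volume : Measure ℝ), y ∈ Set.Ioo x (x + δ) → |f y - L| < ε) ∧
    (∃ g : ℝ → ℝ, (∀ x, ContinuousWithinAt g (Set.Iic x) x) ∧ g =ᵐ[volume] f) ∧
    (∃ g : ℝ → ℝ, (∀ x, ContinuousWithinAt g (Set.Ici x) x) ∧ g =ᵐ[volume] f) := by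
  -- measurable representative
  obtain ⟨f₀, hf₀meas, hff₀⟩ : ∃ f₀ : ℝ → ℝ, Measurable f₀ ∧ f =ᵐ[volume] f₀ := by
    have h := hf.aestronglyMeasurable
    exact ⟨h.mk f, h.stronglyMeasurable_mk.measurable, h.ae_eq_mk⟩
  -- extended modulus
  set V : ℝ → ℝ := fun t => if t ≤ 0 then 0 else ω t with hVdef
  have hVmono : Monotone V := by
    intro a b hab
    by_cases hb : b ≤ 0
    · have ha : a ≤ 0 := le_trans hab hb
      simp [hVdef, ha, hb]
    · by_cases ha : a ≤ 0
      · simp only [hVdef, if_pos ha, if_neg hb]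
        exact (hpos b (not_le.mp hb)).le
      · simp only [hVdef, if_neg ha, if_neg hb]
        rcases eq_or_lt_of_le hab with rfl | h
        · exact le_refl _
        · exact (hmono (Set.mem_Ioi.mpr (not_le.mp ha)) (Set.mem_Ioi.mpr (not_le.mp hb)) h).le
  have hVmeas : Measurable V := hVmono.measurable
  have hVeq : ∀ h : ℝ, 0 < h → V h = ω h := fun h hh => if_neg (not_le.mpr hh)
  set W2 : ℝ → ℝ := fun t => 2 * V t with hW2def
  have hW2mono : Monotone W2 := by
    intro a b hab
    simp only [hW2def]
    have := hVmono hab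
    linarith
  have hW20 : ∀ ε > 0, ∃ δ > 0, δ < 1 ∧ W2 δ < ε := by
    intro ε hε
    have h1 : ∀ᶠ t in nhdsWithin 0 (Set.Ioi (0:ℝ)), ω t < ε/2 :=
      h0.eventually_lt_const (by linarith)
    have h2 : ∀ᶠ t in nhdsWithin 0 (Set.Ioi (0:ℝ)), t ∈ Set.Ioi (0:ℝ) :=
      eventually_mem_nhdsWithin
    have tid : Filter.Tendsto (fun t : ℝ => t) (nhdsWithin 0 (Set.Ioi 0)) (nhds 0) :=
      Filter.tendsto_id.mono_left nhdsWithin_le_nhds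
    have h3 : ∀ᶠ t in nhdsWithin 0 (Set.Ioi (0:ℝ)), t < 1 :=
      tid.eventually_lt_const one_pos
    obtain ⟨δ, hδω, hδpos, hδ1⟩ := (h1.and (h2.and h3)).exists
    refine ⟨δ, hδpos, hδ1, ?_⟩
    simp only [hW2def]
    rw [hVeq δ hδpos]
    linarith
  -- the bound for V
  have hboundV : ∀ h > 0, ∀ᵐ x ∂(volume : Measure ℝ), f (x + h) - f x ≤ V h := by
    intro h hh
    filter_upwards [hbound h hh] with x hx
    rw [hVeq h hh]; exact hx
  -- the good set
  have hGae := good_set f f₀ hf₀meas hff₀ V hVmeas hboundV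
  set G : Set ℝ := {x | (∀ᵐ h ∂(volume.restrict (Set.Ioi (0:ℝ))), f₀ (x + h) ≤ f₀ x + V h) ∧
      (∀ᵐ h ∂(volume.restrict (Set.Ioi (0:ℝ))), f₀ x ≤ f₀ (x - h) + V h)} with hGdef
  have hGconull : ∀ᵐ x ∂(volume : Measure ℝ), x ∈ G := hGae
  have hdense := dense_of_conull G hGconull
  have key : ∀ x ∈ G, ∀ y ∈ G, x < y → f₀ y ≤ f₀ x + W2 (y - x) := by
    intro x hx y hy hxy
    exact key_ineq f₀ V hVmono hxy hx.1 hy.2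
  obtain ⟨Lf, hLf⟩ : ∃ Lf : ℝ → ℝ, ∀ x, ∀ ε > 0, ∃ δ > 0,
      ∀ z ∈ G, z ∈ Set.Ioo (x - δ) x → |f₀ z - Lf x| ≤ ε := by
    have h := left_approx_exists f₀ G W2 hdense key hW2mono hW20
    exact ⟨fun x => (h x).choose, fun x => (h x).choose_spec⟩
  -- reflected function
  set F : ℝ → ℝ := fun t => - f₀ (-t) with hFdef
  set G' : Set ℝ := {t | -t ∈ G} with hG'def
  have hdense' : ∀ a b : ℝ, a < b → (G' ∩ Set.Ioo a b).Nonempty := by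
    intro a b hab
    obtain ⟨z, hzG, hz⟩ := hdense (-b) (-a) (by linarith)
    refine ⟨-z, ?_, by constructor <;> [linarith [hz.2]; linarith [hz.1]]⟩
    show -(-z) ∈ G
    rwa [neg_neg]
  have key' : ∀ s ∈ G', ∀ t ∈ G', s < t → F t ≤ F s + W2 (t - s) := by
    intro s hs t ht hst
    have h := key (-t) ht (-s) hs (by linarith)
    rw [show -s - -t = t - s by ring] at h
    simp only [hFdef]
    linarith
  obtain ⟨LF, hLF⟩ : ∃ LF : ℝ → ℝ, ∀ x, ∀ ε > 0, ∃ δ > 0,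
      ∀ z ∈ G', z ∈ Set.Ioo (x - δ) x → |F z - LF x| ≤ ε := by
    have h := left_approx_exists F G' W2 hdense' key' hW2mono hW20
    exact ⟨fun x => (h x).choose, fun x => (h x).choose_spec⟩
  set Rf : ℝ → ℝ := fun x => - LF (-x) with hRfdef
  have hRf : ∀ x, ∀ ε > 0, ∃ δ > 0, ∀ w ∈ G, w ∈ Set.Ioo x (x + δ) → |f₀ w - Rf x| ≤ ε := by
    intro x ε hε
    obtain ⟨δ, hδ, hh⟩ := hLF (-x) ε hε
    refine ⟨δ, hδ, ?_⟩
    intro w hwG hw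
    have h1 : (-w) ∈ G' := by show -(-w) ∈ G; rwa [neg_neg]
    have h2 : -w ∈ Set.Ioo (-x - δ) (-x) := ⟨by linarith [hw.2], by linarith [hw.1]⟩
    have h3 := hh (-w) h1 h2
    rw [show F (-w) = - f₀ w by simp [hFdef]] at h3
    rw [show f₀ w - Rf x = -(- f₀ w - LF (-x)) by simp only [hRfdef]; ring, abs_neg]
    exact h3
  -- continuity
  have hLcont : ∀ x, ContinuousWithinAt Lf (Set.Iic x) x := leftCont_of_approx f₀ G Lf hdense hLf
  have hLFcont : ∀ x, ContinuousWithinAt LF (Set.Iic x) x :=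
    leftCont_of_approx F G' LF hdense' hLF
  have hRcont : ∀ x, ContinuousWithinAt Rf (Set.Ici x) x := by
    intro x
    have h1 : ContinuousWithinAt LF (Set.Iic (-x)) (-x) := hLFcont (-x)
    have h2 : ContinuousWithinAt (LF ∘ fun t : ℝ => -t) (Set.Ici x) x :=
      ContinuousWithinAt.comp h1 continuous_neg.continuousWithinAt
        (fun t ht => Set.mem_Iic.mpr (neg_le_neg (Set.mem_Ici.mp ht)))
    have h3 := h2.neg
    exact h3
  clear_value Rf G' F G W2 V
  -- sandwich
  have hS1 : ∀ x ∈ G, f₀ x ≤ Lf x := by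
    intro x hxG
    have hmain : ∀ ε : ℝ, 0 < ε → f₀ x ≤ Lf x + ε := by
      intro ε hε
      obtain ⟨δL, hδL, hL⟩ := hLf x (ε/4) (by linarith)
      obtain ⟨δ', hδ'pos, _, hδ'W⟩ := hW20 (ε/2) (by linarith)
      obtain ⟨z, hzG, hz⟩ := hdense (x - min δL δ') x (by linarith [lt_min hδL hδ'pos])
      have h1 := key z hzG x hxG hz.2
      have h2 : W2 (x - z) ≤ W2 δ' := hW2mono (by linarith [hz.1, min_le_right δL δ'])
      have h3 := hL z hzG ⟨by linarith [hz.1, min_le_left δL δ'], hz.2⟩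
      rw [abs_le] at h3
      linarith only [h1, h2, h3.2, hδ'W, hε]
    by_contra hcon
    push_neg at hcon
    have := hmain ((f₀ x - Lf x)/2) (by linarith)
    linarith
  have hS2 : ∀ x ∈ G, Rf x ≤ f₀ x := by
    intro x hxG
    have hmain : ∀ ε : ℝ, 0 < ε → Rf x ≤ f₀ x + ε := by
      intro ε hε
      obtain ⟨δR, hδR, hR⟩ := hRf x (ε/4) (by linarith)
      obtain ⟨δ', hδ'pos, _, hδ'W⟩ := hW20 (ε/2) (by linarith)
      obtain ⟨w, hwG, hw⟩ := hdense x (x + min δR δ') (by linarith [lt_min hδR hδ'pos])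
      have h1 := key x hxG w hwG hw.1
      have h2 : W2 (w - x) ≤ W2 δ' := hW2mono (by linarith [hw.2, min_le_right δR δ'])
      have h3 := hR w hwG ⟨hw.1, by linarith [hw.2, min_le_left δR δ']⟩
      rw [abs_le] at h3
      linarith only [h1, h2, h3.1, hδ'W, hε]
    by_contra hcon
    push_neg at hcon
    have := hmain ((Rf x - f₀ x)/2) (by linarith)
    linarith
  have hS4 : ∀ a b : ℝ, a < b → Lf b ≤ Rf a + W2 (b - a) := by
    intro a b hab
    have hmain : ∀ ε : ℝ, 0 < ε → Lf b ≤ Rf a + W2 (b - a) + ε := by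
      intro ε hε
      obtain ⟨δR, hδR, hR⟩ := hRf a (ε/2) (by linarith)
      obtain ⟨δL, hδL, hL⟩ := hLf b (ε/2) (by linarith)
      set δ := min (min δR δL) ((b - a)/2) with hδdef
      have hδ : 0 < δ := lt_min (lt_min hδR hδL) (by linarith)
      have hδR' : δ ≤ δR := le_trans (min_le_left _ _) (min_le_left _ _)
      have hδL' : δ ≤ δL := le_trans (min_le_left _ _) (min_le_right _ _)
      have hδhalf : δ ≤ (b - a)/2 := min_le_right _ _
      obtain ⟨w, hwG, hw⟩ := hdense a (a + δ) (by linarith)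
      obtain ⟨z, hzG, hz⟩ := hdense (b - δ) b (by linarith)
      have hwz : w < z := by linarith [hw.2, hz.1]
      have h1 := key w hwG z hzG hwz
      have h2 : W2 (z - w) ≤ W2 (b - a) := hW2mono (by linarith [hw.1, hz.2])
      have h3 := hR w hwG ⟨hw.1, by linarith [hw.2]⟩
      have h4 := hL z hzG ⟨by linarith [hz.1], hz.2⟩
      rw [abs_le] at h3 h4
      linarith only [h1, h2, h3.2, h4.1, hε]
    by_contra hcon
    push_neg at hcon
    have := hmain ((Lf b - (Rf a + W2 (b - a)))/2) (by linarith)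
    linarith
  -- jump set
  have hJcount := jump_countable Lf Rf W2 hW2mono hW20 hS4
  have hJ0 : volume {x : ℝ | Rf x < Lf x} = 0 := hJcount.measure_zero _
  have hJae : ∀ᵐ x ∂(volume : Measure ℝ), ¬ (Rf x < Lf x) := by
    have h := measure_eq_zero_iff_ae_notMem.mp hJ0
    filter_upwards [h] with x hx
    exact hx
  have hLfae : Lf =ᵐ[volume] f := by
    filter_upwards [hGconull, hJae, hff₀] with x hG hJx hfx
    have h1 := hS1 x hG
    have h2 := hS2 x hG
    have h3 : Lf x ≤ Rf x := not_lt.mp hJx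
    have h4 : Lf x = f₀ x := le_antisymm (by linarith) h1
    rw [h4, hfx]
  have hRfae : Rf =ᵐ[volume] f := by
    filter_upwards [hGconull, hJae, hff₀] with x hG hJx hfx
    have h1 := hS1 x hG
    have h2 := hS2 x hG
    have h3 : Lf x ≤ Rf x := not_lt.mp hJx
    have h4 : Rf x = f₀ x := le_antisymm h2 (by linarith)
    rw [h4, hfx]
  refine ⟨?_, ?_, ⟨Lf, hLcont, hLfae⟩, ⟨Rf, hRcont, hRfae⟩⟩
  · intro x
    refine ⟨Lf x, ?_⟩
    intro ε hε
    obtain ⟨δ, hδ, hh⟩ := hLf x (ε/2) (by linarith)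
    refine ⟨δ, hδ, ?_⟩
    filter_upwards [hGconull, hff₀] with y hyG hfy hyIoo
    have := hh y hyG hyIoo
    rw [hfy]
    linarith [this]
  · intro x
    refine ⟨Rf x, ?_⟩
    intro ε hε
    obtain ⟨δ, hδ, hh⟩ := hRf x (ε/2) (by linarith)
    refine ⟨δ, hδ, ?_⟩
    filter_upwards [hGconull, hff₀] with y hyG hfy hyIoo
    have := hh y hyG hyIoo
    rw [hfy]
    linarith [this]
end

section
/- Let s ∈ [0,1] and K ∈ L¹(ℝ) with |K|_{TV^s} < ∞. Suppose v ∈ L^∞(ℝ) admits a modulus of growth ω. Then for any ε > 0 the function w = v + ε K∗v admits the modulus of growth h ↦ ω(h) + ε |K|_{TV^s} |v|_∞ h^s, where |v|_∞ = ess sup_{x,y} (v(x) − v(y))/2. -/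
open MeasureTheory Real
open scoped ENNReal

/-- The fractional variation seminorm `|K|_{TV^s}` (possibly `+∞`). -/
noncomputable def fracTV (K : ℝ → ℝ) (s : ℝ) : ℝ≥0∞ :=
  ⨆ (h : ℝ) (_ : 0 < h),
    eLpNorm (fun x => K (x + h) - K x) 1 volume / ENNReal.ofReal (h ^ s)

/-- Convolution of two real functions. -/
noncomputable def conv (K f : ℝ → ℝ) : ℝ → ℝ := fun x => ∫ y : ℝ, K (x - y) * f y

theorem modulus_of_growth_after_dispersive_step (s : ℝ) (hs : s ∈ Set.Icc (0:ℝ) 1)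
    (K : ℝ → ℝ) (hK : Integrable K) (hfin : fracTV K s ≠ ⊤)
    (v : ℝ → ℝ) (hv : MemLp v ⊤ volume)
    (ω : ℝ → ℝ) (hmono : StrictMonoOn ω (Set.Ioi 0)) (hpos : ∀ h > 0, 0 < ω h)
    (hgrowth : ∀ h > 0, ∀ᵐ x ∂(volume : Measure ℝ), v (x + h) - v x ≤ ω h)
    (ε : ℝ) (hε : 0 < ε) :
    ∀ h > 0, ∀ᵐ x ∂(volume : Measure ℝ),
      (v (x + h) + ε * conv K v (x + h)) - (v x + ε * conv K v x)
        ≤ ω h + ε * (fracTV K s).toReal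
            * ((essSup v volume - essInf v volume) / 2) * h ^ s := by
  intro h hh
  set a := essSup v volume with ha
  set b := essInf v volume with hb
  set k : ℝ := (a + b) / 2 with hk
  set M : ℝ := (a - b) / 2 with hM
  -- a.e. bound on v
  have hEtop : eLpNormEssSup v volume < ⊤ := by
    have := hv.2; rwa [eLpNorm_exponent_top] at this
  set C : ℝ := (eLpNormEssSup v volume).toReal with hC
  have hCbd : ∀ᵐ y ∂(volume : Measure ℝ), ‖v y‖ ≤ C := by
    filter_upwards [ae_le_eLpNormEssSup (f := v) (μ := volume)] with y hy
    have := ENNReal.toReal_mono hEtop.ne hy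
    simpa using this
  have hbdd₁ : Filter.IsBoundedUnder (· ≤ ·) (ae (volume : Measure ℝ)) v := by
    refine ⟨C, Filter.eventually_map.mpr ?_⟩
    filter_upwards [hCbd] with y hy
    exact le_trans (le_abs_self _) hy
  have hbdd₂ : Filter.IsBoundedUnder (· ≥ ·) (ae (volume : Measure ℝ)) v := by
    refine ⟨-C, Filter.eventually_map.mpr ?_⟩
    filter_upwards [hCbd] with y hy
    exact neg_le_of_abs_le hy
  have hva : ∀ᵐ y ∂(volume : Measure ℝ), v y ≤ a := ae_le_essSup hbdd₁
  have hvb : ∀ᵐ y ∂(volume : Measure ℝ), b ≤ v y := ae_essInf_le hbdd₂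
  have hvk : ∀ᵐ y ∂(volume : Measure ℝ), |v y - k| ≤ M := by
    filter_upwards [hva, hvb] with y h1 h2
    rw [abs_le]; constructor <;> [skip; skip] <;> simp only [hk, hM] <;> linarith
  -- the kernel difference
  set F : ℝ → ℝ := fun z => K (z + h) - K z with hF
  have hFint : Integrable F := (hK.comp_add_right h).sub hK
  have hspos : (0:ℝ) < h ^ s := Real.rpow_pos_of_pos hh s
  have hdivle : eLpNorm F 1 volume / ENNReal.ofReal (h ^ s) ≤ fracTV K s :=
    le_iSup₂ (f := fun (h' : ℝ) (_ : 0 < h') =>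
      eLpNorm (fun x => K (x + h') - K x) 1 volume / ENNReal.ofReal (h' ^ s)) h hh
  have hle : eLpNorm F 1 volume ≤ fracTV K s * ENNReal.ofReal (h ^ s) :=
    (ENNReal.div_le_iff (ENNReal.ofReal_pos.mpr hspos).ne' ENNReal.ofReal_ne_top).mp hdivle
  have hsn : eLpNorm F 1 volume = ENNReal.ofReal (∫ z, ‖F z‖) := by
    rw [eLpNorm_one_eq_lintegral_enorm, ← ofReal_integral_norm_eq_lintegral_enorm hFint]
  have hKer : ∫ z, ‖F z‖ ≤ (fracTV K s).toReal * h ^ s := by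
    have h1 : (eLpNorm F 1 volume).toReal ≤ (fracTV K s * ENNReal.ofReal (h ^ s)).toReal :=
      ENNReal.toReal_mono (ENNReal.mul_ne_top hfin ENNReal.ofReal_ne_top) hle
    rw [hsn, ENNReal.toReal_ofReal (integral_nonneg fun z => norm_nonneg _),
      ENNReal.toReal_mul, ENNReal.toReal_ofReal hspos.le] at h1
    exact h1
  -- integrability helpers
  have hintDk : ∀ a' : ℝ, Integrable (fun y => K (a' - y) * (v y - k)) := by
    intro a'
    have hKa : Integrable (fun y => K (a' - y)) := hK.comp_sub_left a'
    refine (hKa.norm.mul_const M).mono'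
      (hKa.aestronglyMeasurable.mul (hv.1.sub aestronglyMeasurable_const)) ?_
    filter_upwards [hvk] with y hy
    rw [norm_mul]
    exact mul_le_mul_of_nonneg_left (by simpa using hy) (norm_nonneg _)
  have hintKv : ∀ a' : ℝ, Integrable (fun y => K (a' - y) * v y) := by
    intro a'
    have h1 := (hintDk a').add ((hK.comp_sub_left a').mul_const k)
    refine h1.congr (Filter.Eventually.of_forall fun y => ?_)
    simp only [Pi.add_apply]; ring
  -- splitting lemma
  have hsplit : ∀ a' : ℝ, ∫ y, K (a' - y) * (v y - k) = conv K v a' - k * ∫ z, K z := by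
    intro a'
    have h1 : Integrable (fun y => K (a' - y) * v y) := hintKv a'
    have h2 : Integrable (fun y => K (a' - y) * k) := (hK.comp_sub_left a').mul_const k
    simp only [mul_sub]
    rw [integral_sub h1 h2]
    have h3 : ∫ y, K (a' - y) * k = k * ∫ z, K z := by
      rw [integral_mul_const, integral_sub_left_eq_self K volume a', mul_comm]
    rw [h3]; rfl
  -- pointwise bound on the convolution increment
  have hconv : ∀ x : ℝ, conv K v (x + h) - conv K v x ≤ M * ((fracTV K s).toReal * h ^ s) := by
    intro x
    have e1 : conv K v (x + h) - conv K v x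
        = ∫ y, (K (x + h - y) - K (x - y)) * (v y - k) := by
      rw [show (fun y => (K (x + h - y) - K (x - y)) * (v y - k))
            = fun y => K (x + h - y) * (v y - k) - K (x - y) * (v y - k) from
          funext fun y => by ring]
      rw [integral_sub (hintDk (x + h)) (hintDk x), hsplit (x + h), hsplit x]
      ring
    have hD : Integrable (fun y => (K (x + h - y) - K (x - y)) * (v y - k)) := by
      have := (hintDk (x + h)).sub (hintDk x)
      refine this.congr (Filter.Eventually.of_forall fun y => ?_)
      simp only [Pi.sub_apply]; ring
    have e2 : ∫ y, (K (x + h - y) - K (x - y)) * (v y - k)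
        ≤ ∫ y, ‖(K (x + h - y) - K (x - y)) * (v y - k)‖ :=
      le_trans (Real.le_norm_self _) (norm_integral_le_integral_norm _)
    have e3 : ∫ y, ‖(K (x + h - y) - K (x - y)) * (v y - k)‖
        ≤ ∫ y, ‖K (x + h - y) - K (x - y)‖ * M := by
      refine integral_mono_ae hD.norm ?_ ?_
      · exact (((hK.comp_sub_left (x + h)).sub (hK.comp_sub_left x)).norm.mul_const M).congr
          (Filter.Eventually.of_forall fun y => rfl)
      · filter_upwards [hvk] with y hy
        rw [norm_mul]
        exact mul_le_mul_of_nonneg_left (by simpa using hy) (norm_nonneg _)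
    have e4 : ∫ y, ‖K (x + h - y) - K (x - y)‖ * M = M * ∫ z, ‖F z‖ := by
      rw [integral_mul_const, mul_comm]
      congr 1
      have harg : ∀ y : ℝ, x + h - y = x - y + h := fun y => by ring
      simp_rw [harg]
      exact integral_sub_left_eq_self (fun z => ‖K (z + h) - K z‖) volume x
    have e5 : M * ∫ z, ‖F z‖ ≤ M * ((fracTV K s).toReal * h ^ s) := by
      have hM0 : 0 ≤ M := by
        have hne : (volume : Measure ℝ) ≠ 0 := NeZero.ne _
        have : Filter.NeBot (ae (volume : Measure ℝ)) := ae_neBot.mpr hne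
        obtain ⟨y, hy⟩ := (hvk.and (hva.and hvb)).exists
        have := hy.2
        simp only [hM]; linarith [this.1, this.2]
      exact mul_le_mul_of_nonneg_left hKer hM0
    calc conv K v (x + h) - conv K v x
        = ∫ y, (K (x + h - y) - K (x - y)) * (v y - k) := e1
      _ ≤ ∫ y, ‖(K (x + h - y) - K (x - y)) * (v y - k)‖ := e2
      _ ≤ ∫ y, ‖K (x + h - y) - K (x - y)‖ * M := e3
      _ = M * ∫ z, ‖F z‖ := e4
      _ ≤ M * ((fracTV K s).toReal * h ^ s) := e5
  -- conclusion
  filter_upwards [hgrowth h hh] with x hx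
  have h1 := hconv x
  have h2 : ε * (conv K v (x + h) - conv K v x) ≤ ε * (M * ((fracTV K s).toReal * h ^ s)) :=
    mul_le_mul_of_nonneg_left h1 hε.le
  have : (v (x + h) + ε * conv K v (x + h)) - (v x + ε * conv K v x)
      = (v (x + h) - v x) + ε * (conv K v (x + h) - conv K v x) := by ring
  rw [this]
  have h3 : ε * (fracTV K s).toReal * M * h ^ s = ε * (M * ((fracTV K s).toReal * h ^ s)) := by
    ring
  calc (v (x + h) - v x) + ε * (conv K v (x + h) - conv K v x)
      ≤ ω h + ε * (M * ((fracTV K s).toReal * h ^ s)) := add_le_add hx h2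
    _ = ω h + ε * (fracTV K s).toReal * M * h ^ s := by rw [h3]
end

section
/- Let α ∈ (1,2) and let K be a function on ℝ that is positive and strictly increasing on (−∞,0), negative and strictly increasing on (0,∞), and odd, with ∫_{−h}^0 K(x) dx ≤ C h^{α−1} for all h > 0 and some constant C. Then for every h > 0, ‖K(·+h) − K‖_{L¹(ℝ)} = 4 ∫_{−h}^0 K(x) dx ≤ 4C h^{α−1}; consequently |K|_{TV^s} < ∞ for all s ∈ [0, α−1]. -/
open MeasureTheory Real
open scoped ENNReal

theorem fracTV_finite_of_monotone_odd_kernel (α : ℝ) (hα : α ∈ Set.Ioo (1:ℝ) 2)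
    (K : ℝ → ℝ) (hK : Integrable K) (hodd : ∀ x, K (-x) = -K x)
    (hneg_pos : ∀ x < (0:ℝ), 0 < K x) (hpos_neg : ∀ x > (0:ℝ), K x < 0)
    (hmono1 : StrictMonoOn K (Set.Iio 0)) (hmono2 : StrictMonoOn K (Set.Ioi 0))
    (C : ℝ) (hC : ∀ h > (0:ℝ), (∫ x in (-h)..(0:ℝ), K x) ≤ C * h ^ (α - 1)) :
    (∀ h > (0:ℝ),
      (∫ x : ℝ, |K (x + h) - K x|) = 4 * ∫ x in (-h)..(0:ℝ), K x ∧
      (∫ x : ℝ, |K (x + h) - K x|) ≤ 4 * C * h ^ (α - 1)) ∧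
    (∀ s ∈ Set.Icc (0:ℝ) (α - 1), fracTV K s < ⊤) := by
  have hK0 : K 0 = 0 := by have := hodd 0; simp at this; linarith
  -- key identity
  have key : ∀ h > (0:ℝ), (∫ x : ℝ, |K (x + h) - K x|) = 4 * ∫ x in (-h)..(0:ℝ), K x := by
    intro h hh
    have hKs : Integrable (fun x => K (x + h)) := hK.comp_add_right h
    have hgi : Integrable (fun x => K (x + h) - K x) := hKs.sub hK
    have hzero : (∫ x : ℝ, (K (x + h) - K x)) = 0 := by
      rw [integral_sub hKs hK, integral_add_right_eq_self K h, sub_self]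
    -- sign facts
    have hsign_le : ∀ x ∈ Set.Icc (-h) (0:ℝ), K (x + h) - K x ≤ 0 := by
      intro x hx
      obtain ⟨hx1, hx2⟩ := hx
      have h1 : 0 ≤ K x := by
        rcases lt_or_eq_of_le hx2 with h' | h'
        · exact (hneg_pos x h').le
        · rw [h', hK0]
      have h2 : K (x + h) ≤ 0 := by
        rcases lt_or_eq_of_le (by linarith : (0:ℝ) ≤ x + h) with h' | h'
        · exact (hpos_neg _ h').le
        · rw [← h', hK0]
      linarith
    have hsign_ge : ∀ x ∉ Set.Icc (-h) (0:ℝ), 0 ≤ K (x + h) - K x := by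
      intro x hx
      rw [Set.mem_Icc, not_and_or, not_le, not_le] at hx
      rcases hx with hx | hx
      · have : K x < K (x + h) :=
          hmono1 (by simp only [Set.mem_Iio]; linarith) (by simp only [Set.mem_Iio]; linarith)
            (by linarith)
        linarith
      · have : K x < K (x + h) :=
          hmono2 (by simpa using hx) (by simp only [Set.mem_Ioi]; linarith) (by linarith)
        linarith
    have habs : ∀ x : ℝ, |K (x + h) - K x| =
        (K (x + h) - K x) +
          2 * (Set.Icc (-h) (0:ℝ)).indicator (fun x => -(K (x + h) - K x)) x := by
      intro x
      by_cases hx : x ∈ Set.Icc (-h) (0:ℝ)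
      · rw [Set.indicator_of_mem hx, abs_of_nonpos (hsign_le x hx)]; ring
      · rw [Set.indicator_of_notMem hx, abs_of_nonneg (hsign_ge x hx)]; ring
    have hind : Integrable ((Set.Icc (-h) (0:ℝ)).indicator
        (fun x => -(K (x + h) - K x))) := hgi.neg.indicator measurableSet_Icc
    have hstep : (∫ x : ℝ, |K (x + h) - K x|) =
        2 * ∫ x in Set.Icc (-h) (0:ℝ), -(K (x + h) - K x) := by
      calc (∫ x : ℝ, |K (x + h) - K x|)
          = ∫ x : ℝ, ((K (x + h) - K x) +
              2 * (Set.Icc (-h) (0:ℝ)).indicator (fun x => -(K (x + h) - K x)) x) := by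
            exact integral_congr_ae (Filter.Eventually.of_forall habs)
        _ = (∫ x : ℝ, (K (x + h) - K x)) +
              2 * ∫ x : ℝ, (Set.Icc (-h) (0:ℝ)).indicator (fun x => -(K (x + h) - K x)) x := by
            rw [integral_add hgi (hind.const_mul 2), integral_const_mul]
        _ = 2 * ∫ x in Set.Icc (-h) (0:ℝ), -(K (x + h) - K x) := by
            rw [hzero, integral_indicator measurableSet_Icc]; ring
    have hIcc : (∫ x in Set.Icc (-h) (0:ℝ), -(K (x + h) - K x)) =
        ∫ x in (-h)..(0:ℝ), (K x - K (x + h)) := by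
      rw [integral_Icc_eq_integral_Ioc, intervalIntegral.integral_of_le (by linarith : -h ≤ (0:ℝ))]
      congr 1; funext x; ring
    have hsplit : (∫ x in (-h)..(0:ℝ), (K x - K (x + h))) =
        (∫ x in (-h)..(0:ℝ), K x) - ∫ x in (-h)..(0:ℝ), K (x + h) := by
      exact intervalIntegral.integral_sub hK.intervalIntegrable hKs.intervalIntegrable
    have hshift : (∫ x in (-h)..(0:ℝ), K (x + h)) = ∫ x in (0:ℝ)..h, K x := by
      have := intervalIntegral.integral_comp_add_right (a := -h) (b := 0) K h
      simpa using this
    have hoddint : (∫ x in (0:ℝ)..h, K x) = -∫ x in (-h)..(0:ℝ), K x := by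
      have h1 : (∫ x in (0:ℝ)..h, K (-x)) = ∫ x in (-h)..(0:ℝ), K x := by
        simpa using intervalIntegral.integral_comp_neg (a := (0:ℝ)) (b := h) (f := K)
      have h2 : (∫ x in (0:ℝ)..h, K (-x)) = -∫ x in (0:ℝ)..h, K x := by
        simp_rw [hodd]; rw [intervalIntegral.integral_neg]
      linarith
    rw [hstep, hIcc, hsplit, hshift, hoddint]; ring
  have hApos : ∀ h > (0:ℝ), 0 < ∫ x in (-h)..(0:ℝ), K x := by
    intro h hh
    refine intervalIntegral.intervalIntegral_pos_of_pos_on hK.intervalIntegrable ?_ (by linarith)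
    intro x hx
    exact hneg_pos x hx.2
  have hCpos : 0 < C := by
    have h1 := hC 1 one_pos
    have h2 := hApos 1 one_pos
    rw [Real.one_rpow] at h1
    linarith
  constructor
  · intro h hh
    refine ⟨key h hh, ?_⟩
    rw [key h hh]
    have := hC h hh
    linarith
  · intro s hs
    set M : ℝ := max (4 * C) (2 * ∫ x : ℝ, |K x|) with hM
    have hfin : fracTV K s ≤ ENNReal.ofReal M := by
      refine iSup₂_le fun h hh => ?_
      have hKs : Integrable (fun x => K (x + h)) := hK.comp_add_right h
      have hgi : Integrable (fun x => K (x + h) - K x) := hKs.sub hK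
      have help : eLpNorm (fun x => K (x + h) - K x) 1 volume =
          ENNReal.ofReal (∫ x : ℝ, |K (x + h) - K x|) := by
        rw [eLpNorm_one_eq_lintegral_enorm, ← ofReal_integral_norm_eq_lintegral_enorm hgi]
        simp [Real.norm_eq_abs]
      have hspos : (0:ℝ) < h ^ s ∨ True := Or.inr trivial
      refine ENNReal.div_le_of_le_mul ?_
      rw [help]
      rcases le_or_gt h 1 with hle | hgt
      · -- small h
        have h1 : (∫ x : ℝ, |K (x + h) - K x|) ≤ 4 * C * h ^ (α - 1) := by
          rw [key h hh]; have := hC h hh; linarith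
        have h2 : h ^ (α - 1) ≤ h ^ s :=
          Real.rpow_le_rpow_of_exponent_ge hh hle hs.2
        have h3 : (∫ x : ℝ, |K (x + h) - K x|) ≤ (4 * C) * h ^ s := by nlinarith
        calc ENNReal.ofReal (∫ x : ℝ, |K (x + h) - K x|)
            ≤ ENNReal.ofReal ((4 * C) * h ^ s) := ENNReal.ofReal_le_ofReal h3
          _ = ENNReal.ofReal (4 * C) * ENNReal.ofReal (h ^ s) := by
              rw [ENNReal.ofReal_mul (by positivity)]
          _ ≤ ENNReal.ofReal M * ENNReal.ofReal (h ^ s) := by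
              exact mul_le_mul_left (ENNReal.ofReal_le_ofReal (le_max_left _ _)) _
      · -- large h
        have h1 : (∫ x : ℝ, |K (x + h) - K x|) ≤ 2 * ∫ x : ℝ, |K x| := by
          have habs : Integrable (fun x => |K (x + h)|) := hKs.abs
          have habs2 : Integrable (fun x => |K x|) := hK.abs
          have htri : (∫ x : ℝ, |K (x + h) - K x|) ≤ ∫ x : ℝ, (|K (x + h)| + |K x|) := by
            refine integral_mono hgi.abs (habs.add habs2) ?_
            intro x; exact abs_sub _ _
          have hsum : (∫ x : ℝ, (|K (x + h)| + |K x|)) = 2 * ∫ x : ℝ, |K x| := by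
            rw [integral_add habs habs2,
              integral_add_right_eq_self (fun x => |K x|) h]; ring
          linarith
        have h2 : (1:ℝ≥0∞) ≤ ENNReal.ofReal (h ^ s) := by
          rw [ENNReal.one_le_ofReal]
          exact Real.one_le_rpow hgt.le hs.1
        calc ENNReal.ofReal (∫ x : ℝ, |K (x + h) - K x|)
            ≤ ENNReal.ofReal M := ENNReal.ofReal_le_ofReal (le_trans h1 (le_max_right _ _))
          _ = ENNReal.ofReal M * 1 := (mul_one _).symm
          _ ≤ ENNReal.ofReal M * ENNReal.ofReal (h ^ s) := mul_le_mul_right h2 _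
    exact lt_of_le_of_lt hfin ENNReal.ofReal_lt_top
end
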